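/- The moment cone S_A is a convex cone in ℝ^m, and it equals the convex conic hull of the image of the moment curve: S_A = conv cone s_A(X). -/

import Mathlib

open MeasureTheory
open scoped ENNReal NNReal

set_option linter.unusedSectionVars false

namespace MomentConeAux

variable {X : Type*}

/-- The convex conic hull of the image of the moment curve. -/
def coneSet {m : ℕ} (f : X → Fin m → ℝ) : Set (Fin m → ℝ) :=
  {s | ∃ (k : ℕ) (x : Fin k → X) (c : Fin k → ℝ),
    (∀ j, 0 ≤ c j) ∧ ∀ i, s i = ∑ j, c j * f (x j) i}

lemma zero_mem_coneSet {m} (f : X → Fin m → ℝ) : (0 : Fin m → ℝ) ∈ coneSet f :=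
  ⟨0, Fin.elim0, Fin.elim0, fun j => j.elim0, fun i => by simp⟩

lemma apply_mem_coneSet {m} (f : X → Fin m → ℝ) (x : X) : f x ∈ coneSet f :=
  ⟨1, fun _ => x, fun _ => 1, fun _ => zero_le_one, fun i => by simp⟩

lemma smul_mem_coneSet {m} (f : X → Fin m → ℝ) {c : ℝ} (hc : 0 ≤ c) {s}
    (hs : s ∈ coneSet f) : c • s ∈ coneSet f := by
  obtain ⟨k, x, d, hd, hsum⟩ := hs
  refine ⟨k, x, fun j => c * d j, fun j => mul_nonneg hc (hd j), fun i => ?_⟩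
  simp only [Pi.smul_apply, smul_eq_mul, hsum i, Finset.mul_sum]
  exact Finset.sum_congr rfl fun j _ => by ring

lemma add_mem_coneSet {m} {f : X → Fin m → ℝ} {s t}
    (hs : s ∈ coneSet f) (ht : t ∈ coneSet f) : s + t ∈ coneSet f := by
  obtain ⟨k1, x1, c1, hc1, h1⟩ := hs
  obtain ⟨k2, x2, c2, hc2, h2⟩ := ht
  refine ⟨k1 + k2, Fin.append x1 x2, Fin.append c1 c2, ?_, fun i => ?_⟩
  · intro j
    refine Fin.addCases (fun j1 => ?_) (fun j2 => ?_) j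
    · simpa [Fin.append_left] using hc1 j1
    · simpa [Fin.append_right] using hc2 j2
  · rw [Pi.add_apply, h1 i, h2 i, Fin.sum_univ_add]
    congr 1
    · exact Finset.sum_congr rfl fun j _ => by simp [Fin.append_left]
    · exact Finset.sum_congr rfl fun j _ => by simp [Fin.append_right]

lemma convex_coneSet {m} (f : X → Fin m → ℝ) : Convex ℝ (coneSet f) := by
  intro s hs t ht p q hp hq _
  exact add_mem_coneSet (smul_mem_coneSet f hp hs) (smul_mem_coneSet f hq ht)

lemma le_of_combo_lt {A B D : ℝ}
    (h : ∀ t : ℝ, 0 < t → t ≤ 1 → t * A + (1 - t) * B < D) : B ≤ D := by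
  by_contra hc
  push_neg at hc
  rcases le_or_gt B A with hAB | hAB
  · have := h 1 one_pos le_rfl; linarith
  · have hBA : 0 < B - A := by linarith
    have hBD : 0 < B - D := by linarith
    have ht0 : 0 < min 1 ((B - D) / (B - A)) := lt_min one_pos (div_pos hBD hBA)
    have h2 := h _ ht0 (min_le_left _ _)
    have h3 : min 1 ((B - D) / (B - A)) * (B - A) ≤ B - D := by
      calc min 1 ((B - D) / (B - A)) * (B - A)
          ≤ ((B - D) / (B - A)) * (B - A) :=
            mul_le_mul_of_nonneg_right (min_le_right _ _) hBA.le
        _ = B - D := by field_simp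
    nlinarith

lemma integral_linear_comp [MeasurableSpace X] (μ : Measure X) {p : ℕ}
    (ℓ : (Fin p → ℝ) →ₗ[ℝ] ℝ) (f : X → Fin p → ℝ)
    (hfi : ∀ i, Integrable (fun x => f x i) μ) :
    ∫ x, ℓ (f x) ∂μ = ℓ (fun i => ∫ x, f x i ∂μ) := by
  have h1 : ∀ y : Fin p → ℝ, ℓ y = ∑ i, y i * ℓ (fun j => if i = j then 1 else 0) := by
    intro y
    rw [LinearMap.pi_apply_eq_sum_univ]
    simp only [smul_eq_mul]
  calc ∫ x, ℓ (f x) ∂μ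
      = ∫ x, ∑ i, f x i * ℓ (fun j => if i = j then 1 else 0) ∂μ :=
        integral_congr_ae (Filter.Eventually.of_forall fun x => h1 (f x))
    _ = ∑ i, ∫ x, f x i * ℓ (fun j => if i = j then 1 else 0) ∂μ :=
        integral_finset_sum _ fun i _ => (hfi i).mul_const _
    _ = ∑ i, (∫ x, f x i ∂μ) * ℓ (fun j => if i = j then 1 else 0) :=
        Finset.sum_congr rfl fun i _ => integral_mul_const _ _
    _ = ℓ (fun i => ∫ x, f x i ∂μ) := (h1 _).symm

lemma integrable_linear_comp [MeasurableSpace X] (μ : Measure X) {p : ℕ}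
    (ℓ : (Fin p → ℝ) →ₗ[ℝ] ℝ) (f : X → Fin p → ℝ)
    (hfi : ∀ i, Integrable (fun x => f x i) μ) :
    Integrable (fun x => ℓ (f x)) μ := by
  have h1 : (fun x => ℓ (f x))
      = fun x => ∑ i, f x i * ℓ (fun j => if i = j then 1 else 0) := by
    funext x
    rw [LinearMap.pi_apply_eq_sum_univ]
    simp [smul_eq_mul]
  rw [h1]
  exact integrable_finset_sum _ fun i _ => (hfi i).mul_const _

/-- Richter's theorem for finite measures, by induction on dimension. -/
theorem key (m : ℕ) : ∀ {X : Type*} [MeasurableSpace X] (μ : Measure X)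
    [IsFiniteMeasure μ] (f : X → Fin m → ℝ),
    (∀ i, Measurable fun x => f x i) →
    (∀ i, Integrable (fun x => f x i) μ) →
    ∃ (k : ℕ) (xs : Fin k → X) (c : Fin k → ℝ), (∀ j, 0 ≤ c j) ∧
      ∀ i, ∫ x, f x i ∂μ = ∑ j, c j * f (xs j) i := by
  induction m with
  | zero =>
    intro X _ μ _ f _ _
    exact ⟨0, Fin.elim0, Fin.elim0, fun j => j.elim0, fun i => i.elim0⟩
  | succ n IH =>
    intro X _ μ _ f hfm hfi
    classical
    set b : Fin (n + 1) → ℝ := fun i => ∫ x, f x i ∂μ with hb_def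
    by_cases hb : b ∈ coneSet f
    · obtain ⟨k, xs, c, hc, hsum⟩ := hb
      exact ⟨k, xs, c, hc, hsum⟩
    have hconv := convex_coneSet f
    have hmem0 := zero_mem_coneSet f
    -- Produce a nonzero linear functional that is ≤ 0 on the values of f, and
    -- vanishes a.e. along f.
    obtain ⟨ℓ, hℓne, hℓle, hℓae⟩ :
        ∃ ℓ : (Fin (n + 1) → ℝ) →ₗ[ℝ] ℝ, ℓ ≠ 0 ∧ (∀ x, ℓ (f x) ≤ 0) ∧
          ∀ᵐ x ∂μ, ℓ (f x) = 0 := by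
      by_cases hsp : affineSpan ℝ (coneSet f) = ⊤
      · -- full-dimensional case: separate using Hahn-Banach
        have hint : (interior (coneSet f)).Nonempty :=
          (hconv.interior_nonempty_iff_affineSpan_eq_top).2 hsp
        have hbnotint : b ∉ interior (coneSet f) := fun h => hb (interior_subset h)
        obtain ⟨L, hL⟩ :=
          geometric_hahn_banach_open_point hconv.interior isOpen_interior hbnotint
        obtain ⟨x0, hx0⟩ := hint
        have hyleb : ∀ y ∈ coneSet f, L y ≤ L b := by
          intro y hy
          refine le_of_combo_lt (A := L x0) (fun t ht0 ht1 => ?_)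
          have hmem : t • x0 + (1 - t) • y ∈ interior (coneSet f) :=
            hconv.combo_interior_self_mem_interior hx0 hy ht0 (by linarith) (by ring)
          simpa [map_add, ContinuousLinearMap.map_smul, smul_eq_mul] using hL _ hmem
        have hLb0 : 0 ≤ L b := by simpa using hyleb 0 hmem0
        have hCle0 : ∀ y ∈ coneSet f, L y ≤ 0 := by
          intro y hy
          by_contra hpos
          push_neg at hpos
          have hmem : ((L b + 1) / L y) • y ∈ coneSet f :=
            smul_mem_coneSet f (by positivity) hy
          have h2 := hyleb _ hmem
          rw [ContinuousLinearMap.map_smul, smul_eq_mul,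
            div_mul_cancel₀ _ (ne_of_gt hpos)] at h2
          linarith
        have hLne : (L : (Fin (n + 1) → ℝ) →ₗ[ℝ] ℝ) ≠ 0 := by
          intro h0
          have hx := hL x0 hx0
          have h1 : L x0 = 0 := by
            have := LinearMap.congr_fun h0 x0
            simpa using this
          have h2 : L b = 0 := by
            have := LinearMap.congr_fun h0 b
            simpa using this
          rw [h1, h2] at hx
          exact lt_irrefl 0 hx
        have hle : ∀ x, L (f x) ≤ 0 := fun x => hCle0 _ (apply_mem_coneSet f x)
        have hint_eq : ∫ x, L (f x) ∂μ = L b :=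
          integral_linear_comp μ (L : (Fin (n + 1) → ℝ) →ₗ[ℝ] ℝ) f hfi
        have hLb_le : L b ≤ 0 := hint_eq ▸ integral_nonpos hle
        have hLb : L b = 0 := le_antisymm hLb_le hLb0
        have hzero : ∀ᵐ x ∂μ, L (f x) = 0 := by
          have hInt : Integrable (fun x => -(L (f x))) μ :=
            (integrable_linear_comp μ (L : (Fin (n + 1) → ℝ) →ₗ[ℝ] ℝ) f hfi).neg
          have hnn : 0 ≤ fun x => -(L (f x)) := fun x => by
            simpa using hle x
          have hI0 : ∫ x, -(L (f x)) ∂μ = 0 := by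
            rw [integral_neg, hint_eq, hLb, neg_zero]
          have := (integral_eq_zero_iff_of_nonneg hnn hInt).1 hI0
          filter_upwards [this] with x hx
          simpa using hx
        exact ⟨(L : (Fin (n + 1) → ℝ) →ₗ[ℝ] ℝ), hLne, hle, hzero⟩
      · -- degenerate case: the cone lies in a proper subspace
        have hvs : vectorSpan ℝ (coneSet f) ≠ ⊤ := by
          intro h
          exact hsp ((AffineSubspace.affineSpan_eq_top_iff_vectorSpan_eq_top_of_nonempty ℝ _ _
            ⟨0, hmem0⟩).2 h)
        obtain ⟨ℓ, hℓ0, hker⟩ :=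
          Submodule.exists_le_ker_of_lt_top _ (lt_top_iff_ne_top.2 hvs)
        have hzero : ∀ x, ℓ (f x) = 0 := by
          intro x
          have hv : f x - 0 ∈ vectorSpan ℝ (coneSet f) := by
            simpa [vsub_eq_sub] using
              vsub_mem_vectorSpan ℝ (apply_mem_coneSet f x) hmem0
          rw [sub_zero] at hv
          exact LinearMap.mem_ker.1 (hker hv)
        exact ⟨ℓ, hℓ0, fun x => le_of_eq (hzero x),
          Filter.Eventually.of_forall hzero⟩
    -- reduce dimension along ker ℓ
    set u : Fin (n + 1) → ℝ := fun i => ℓ (fun j => if i = j then 1 else 0) with hu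
    have hℓeq : ∀ y : Fin (n + 1) → ℝ, ℓ y = ∑ i, y i * u i := by
      intro y
      rw [LinearMap.pi_apply_eq_sum_univ]
      simp [smul_eq_mul, hu]
    obtain ⟨i0, hi0⟩ : ∃ i0, u i0 ≠ 0 := by
      by_contra h
      push_neg at h
      apply hℓne
      ext y
      · simp [hℓeq, h]
    set N : Set X := {x | ℓ (f x) = 0} with hN_def
    have hℓfm : Measurable fun x => ℓ (f x) := by
      have : (fun x => ℓ (f x)) = fun x => ∑ i, f x i * u i := funext fun x => hℓeq (f x)
      rw [this]
      exact Finset.measurable_sum _ fun i _ => (hfm i).mul_const _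
    have hNmeas : MeasurableSet N := measurableSet_eq_fun hℓfm measurable_const
    have hNae : ∀ᵐ x ∂μ, x ∈ N := hℓae
    have hrestrict : μ.restrict N = μ := Measure.restrict_eq_self_of_ae_mem hNae
    set μ' : Measure N := μ.comap Subtype.val with hμ'
    have hmap : Measure.map Subtype.val μ' = μ.restrict N :=
      map_comap_subtype_coe hNmeas _
    have hfin' : IsFiniteMeasure μ' := by
      constructor
      rw [hμ', Measure.comap_apply _ Subtype.val_injective
        (fun s hs => (MeasurableEmbedding.subtype_coe hNmeas).measurableSet_image.2 hs)
        _ MeasurableSet.univ, Subtype.coe_image_univ]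
      exact measure_lt_top μ N
    have hint' : ∀ i : Fin (n + 1), Integrable (fun x : N => f ↑x i) μ' := by
      intro i
      have h1 : Integrable (fun x => f x i) (Measure.map Subtype.val μ') := by
        rw [hmap, hrestrict]
        exact hfi i
      exact ((MeasurableEmbedding.subtype_coe hNmeas).integrable_map_iff).1 h1
    have htrans : ∀ i : Fin (n + 1), ∫ x, f x i ∂μ = ∫ x : N, f ↑x i ∂μ' := by
      intro i
      rw [hμ']
      exact ((integral_subtype_comap hNmeas (fun y => f y i)).trans
        (by rw [hrestrict])).symm
    obtain ⟨k, xs, c, hc, hsum⟩ := IH μ' (fun x j => f ↑x (i0.succAbove j))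
      (fun j => (hfm _).comp measurable_subtype_coe) (fun j => hint' _)
    refine ⟨k, fun t => ↑(xs t), c, hc, fun i => ?_⟩
    -- coordinate reconstruction on N
    have hcoord : ∀ x : N,
        f ↑x i0 = ∑ j, (-(u (i0.succAbove j)) / u i0) * f ↑x (i0.succAbove j) := by
      intro x
      have hx : ℓ (f ↑x) = 0 := x.2
      rw [hℓeq] at hx
      rw [Fin.sum_univ_succAbove (fun i => f ↑x i * u i) i0] at hx
      have h3 : ∑ j, f ↑x (i0.succAbove j) * u (i0.succAbove j)
          = -(f ↑x i0 * u i0) := by linarith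
      have h2 : ∑ j, (-(u (i0.succAbove j)) / u i0) * f ↑x (i0.succAbove j)
          = (∑ j, f ↑x (i0.succAbove j) * u (i0.succAbove j)) * (-(u i0)⁻¹) := by
        rw [Finset.sum_mul]
        refine Finset.sum_congr rfl fun j _ => ?_
        rw [div_eq_mul_inv]
        ring
      rw [h2, h3]
      field_simp
    by_cases hii : i = i0
    · rw [hii, htrans i0]
      have hgint : ∀ j : Fin n,
          Integrable (fun x : N => (-(u (i0.succAbove j)) / u i0) * f ↑x (i0.succAbove j)) μ' :=
        fun j => (hint' _).const_mul _
      calc ∫ x : N, f ↑x i0 ∂μ'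
          = ∫ x : N, ∑ j, (-(u (i0.succAbove j)) / u i0) * f ↑x (i0.succAbove j) ∂μ' := by
            exact integral_congr_ae (Filter.Eventually.of_forall hcoord)
        _ = ∑ j, (-(u (i0.succAbove j)) / u i0) * ∫ x : N, f ↑x (i0.succAbove j) ∂μ' := by
            rw [integral_finset_sum _ fun j _ => hgint j]
            exact Finset.sum_congr rfl fun j _ => integral_const_mul _ _
        _ = ∑ j, (-(u (i0.succAbove j)) / u i0) * ∑ t, c t * f ↑(xs t) (i0.succAbove j) := by
            exact Finset.sum_congr rfl fun j _ => by rw [hsum j]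
        _ = ∑ t, c t * ∑ j, (-(u (i0.succAbove j)) / u i0) * f ↑(xs t) (i0.succAbove j) := by
            simp only [Finset.mul_sum]
            rw [Finset.sum_comm]
            exact Finset.sum_congr rfl fun t _ => Finset.sum_congr rfl fun j _ => by ring
        _ = ∑ t, c t * f ↑(xs t) i0 := by
            exact Finset.sum_congr rfl fun t _ => by rw [← hcoord (xs t)]
    · obtain ⟨j, hj⟩ := Fin.exists_succAbove_eq hii
      rw [htrans i, ← hj]
      exact hsum j


/-- Richter's theorem for arbitrary measures: reduce to a finite measure by a
change of density. -/
theorem main [MeasurableSpace X] (μ : Measure X) {m : ℕ} (f : X → Fin m → ℝ)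
    (hfm : ∀ i, Measurable fun x => f x i)
    (hfi : ∀ i, Integrable (fun x => f x i) μ) :
    ∃ (k : ℕ) (xs : Fin k → X) (c : Fin k → ℝ), (∀ j, 0 ≤ c j) ∧
      ∀ i, ∫ x, f x i ∂μ = ∑ j, c j * f (xs j) i := by
  classical
  set w : X → ℝ := fun x => ∑ i, |f x i| with hw
  have hw0 : ∀ x, 0 ≤ w x := fun x => Finset.sum_nonneg fun i _ => abs_nonneg _
  have hfw : ∀ x i, |f x i| ≤ w x := fun x i =>
    Finset.single_le_sum (f := fun i => |f x i|) (fun i _ => abs_nonneg _)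
      (Finset.mem_univ i)
  have hwm : Measurable w := Finset.measurable_sum _ fun i _ => (hfm i).abs
  set ν : Measure X := μ.withDensity fun x => ENNReal.ofReal (w x) with hν
  have hνfin : IsFiniteMeasure ν := by
    constructor
    rw [hν, withDensity_apply _ MeasurableSet.univ, Measure.restrict_univ]
    have heq : ∀ x, ENNReal.ofReal (w x) = ∑ i, ENNReal.ofReal |f x i| := fun x =>
      ENNReal.ofReal_sum_of_nonneg fun i _ => abs_nonneg _
    calc ∫⁻ x, ENNReal.ofReal (w x) ∂μ
        = ∑ i, ∫⁻ x, ENNReal.ofReal |f x i| ∂μ := by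
          simp only [heq]
          exact lintegral_finset_sum _ fun i _ => (hfm i).abs.ennreal_ofReal
      _ < ⊤ := by
        refine ENNReal.sum_lt_top.mpr fun i _ => ?_
        have h2 := (hfi i).hasFiniteIntegral
        rw [HasFiniteIntegral] at h2
        simp only [← Real.norm_eq_abs, ofReal_norm]
        exact h2
  set g : X → Fin m → ℝ := fun x i => if w x = 0 then 0 else f x i / w x with hg
  have hwms : MeasurableSet {x | w x = 0} := measurableSet_eq_fun hwm measurable_const
  have hgm : ∀ i, Measurable fun x => g x i := fun i =>
    Measurable.ite hwms measurable_const ((hfm i).div hwm)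
  have hfg : ∀ x i, f x i = w x * g x i := by
    intro x i
    by_cases h : w x = 0
    · have h1 : |f x i| = 0 := le_antisymm (h ▸ hfw x i) (abs_nonneg _)
      simp [hg, h, abs_eq_zero.1 h1]
    · rw [hg]
      simp only [h, if_false]
      field_simp
  have hgb : ∀ x i, |g x i| ≤ 1 := by
    intro x i
    by_cases h : w x = 0
    · simp [hg, h]
    · have hpos : 0 < w x := lt_of_le_of_ne (hw0 x) (Ne.symm h)
      rw [hg]
      simp only [h, if_false, abs_div, abs_of_pos hpos]
      rw [div_le_one hpos]
      exact hfw x i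
  have hgi : ∀ i, Integrable (fun x => g x i) ν :=
    fun i => Integrable.mono' (integrable_const 1) (hgm i).aestronglyMeasurable
      (Filter.Eventually.of_forall fun x => by rw [Real.norm_eq_abs]; exact hgb x i)
  have hint_eq : ∀ i, ∫ x, f x i ∂μ = ∫ x, g x i ∂ν := by
    intro i
    have h1 : ν = μ.withDensity fun x => ((w x).toNNReal : ℝ≥0∞) := by
      rw [hν]
      rfl
    rw [h1, integral_withDensity_eq_integral_smul hwm.real_toNNReal]
    refine integral_congr_ae (Filter.Eventually.of_forall fun x => ?_)
    show f x i = (w x).toNNReal • g x i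
    rw [NNReal.smul_def, Real.coe_toNNReal _ (hw0 x), smul_eq_mul]
    exact hfg x i
  obtain ⟨k, xs, c, hc, hsum⟩ := key m ν g hgm hgi
  refine ⟨k, xs, fun j => c j * (if w (xs j) = 0 then 0 else (w (xs j))⁻¹),
    fun j => ?_, fun i => ?_⟩
  · by_cases h : w (xs j) = 0
    · simp [h]
    · simp only [h, if_false]
      exact mul_nonneg (hc j) (inv_nonneg.2 (hw0 _))
  · rw [hint_eq i, hsum i]
    refine Finset.sum_congr rfl fun j _ => ?_
    by_cases h : w (xs j) = 0
    · rw [hg]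
      simp [h]
    · rw [hg]
      simp only [h, if_false]
      rw [div_eq_mul_inv]
      ring

theorem integrable_dirac' [MeasurableSpace X] (x : X) {h : X → ℝ} (hh : Measurable h) :
    Integrable h (Measure.dirac x) := by
  constructor
  · exact hh.aestronglyMeasurable
  · rw [HasFiniteIntegral]
    rw [lintegral_dirac' x (by exact hh.nnnorm.coe_nnreal_ennreal)]
    exact ENNReal.coe_lt_top

end MomentConeAux

open MomentConeAux in
/-- The moment cone `S_A` is a convex cone in `ℝ^m`, and it equals the convex
conic hull of the image of the moment curve: `S_A = conv cone s_A(X)`. -/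
theorem moment_cone_convex_cone_eq_conic_hull {X : Type*} [MeasurableSpace X]
    {m : ℕ} (a : Fin m → X → ℝ) (ha : ∀ i, Measurable (a i)) :
    let S : Set (Fin m → ℝ) := {s | ∃ μ : Measure X,
      (∀ i, Integrable (a i) μ) ∧ ∀ i, s i = ∫ x, a i x ∂μ}
    Convex ℝ S ∧ (∀ (c : ℝ), 0 ≤ c → ∀ s ∈ S, c • s ∈ S) ∧
      S = {s | ∃ (k : ℕ) (x : Fin k → X) (c : Fin k → ℝ),
        (∀ j, 0 ≤ c j) ∧ ∀ i, s i = ∑ j, c j * a i (x j)} := by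
  intro S
  have hSC : S = coneSet (fun x i => a i x) := by
    apply Set.Subset.antisymm
    · rintro s ⟨μ, hint, hs⟩
      obtain ⟨k, xs, c, hc, hsum⟩ := main μ (fun x i => a i x)
        (fun i => ha i) (fun i => hint i)
      exact ⟨k, xs, c, hc, fun i => by rw [hs i]; exact hsum i⟩
    · rintro s ⟨k, xs, c, hc, hsum⟩
      refine ⟨∑ j, ENNReal.ofReal (c j) • Measure.dirac (xs j),
        fun i => ?_, fun i => ?_⟩
      · refine integrable_finset_sum_measure.2 fun j _ => ?_
        exact (integrable_dirac' (xs j) (ha i)).smul_measure ENNReal.ofReal_ne_top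
      · rw [hsum i]
        rw [integral_finset_sum_measure (fun j _ =>
          (integrable_dirac' (xs j) (ha i)).smul_measure ENNReal.ofReal_ne_top)]
        refine Finset.sum_congr rfl fun j _ => ?_
        rw [integral_smul_measure, integral_dirac' _ _ (ha i).stronglyMeasurable,
          ENNReal.toReal_ofReal (hc j), smul_eq_mul]
  refine ⟨?_, ?_, ?_⟩
  · rw [hSC]
    exact convex_coneSet _
  · rw [hSC]
    exact fun c hc s hs => smul_mem_coneSet _ hc hs
  · exact hSC
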